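/- arXiv:1301.6457 — 2 statements merged into one kernel-verified Lean document; each statement's English description precedes it below -/
import Mathlib

section
/- For ordinals α = Σ a_i ω^i and β = Σ b_i ω^i below ω^ω in Cantor normal form, the infimum of α and β with respect to the weaker-than order ⪯ exists and equals Σ min(a_i, b_i) ω^i. -/
open Ordinal

/-- The ordinal `ω^d * a_d + ... + ω * a_1 + a_0`, i.e. the ordinal below `ω^ω` with
Cantor normal form given by the natural-number coefficients `a 0, ..., a d`. -/
noncomputable def cnf (d : ℕ) (a : ℕ → ℕ) : Ordinal :=
  ((List.range (d + 1)).reverse.map (fun i => ω ^ i * (a i : Ordinal))).sum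

/-- `α` is weaker than `β`: every Cantor coefficient of `α` is at most the
corresponding Cantor coefficient of `β`. -/
def Weaker (α β : Ordinal) : Prop :=
  ∃ (d : ℕ) (a b : ℕ → ℕ), α = cnf d a ∧ β = cnf d b ∧ ∀ i, a i ≤ b i

lemma cnf_zero (a : ℕ → ℕ) : cnf 0 a = (a 0 : Ordinal) := by
  simp [cnf, List.range_succ]

lemma cnf_succ (d : ℕ) (a : ℕ → ℕ) :
    cnf (d + 1) a = ω ^ (d + 1) * (a (d + 1) : Ordinal) + cnf d a := by
  simp [cnf, List.range_succ, List.sum_append]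

lemma natCast_lt_omega_pow (n i : ℕ) : (n : Ordinal) < ω ^ (i + 1) := by
  calc (n : Ordinal) < ω := natCast_lt_omega0 n
  _ ≤ ω ^ (i + 1) := by
    conv_lhs => rw [← pow_one ω]
    exact pow_le_pow_right₀ one_lt_omega0.le (by omega)

lemma cnf_lt (d : ℕ) (a : ℕ → ℕ) : cnf d a < ω ^ (d + 1) := by
  induction d with
  | zero => rw [cnf_zero]; exact natCast_lt_omega_pow _ 0
  | succ d ih =>
    rw [cnf_succ]
    calc ω ^ (d + 1) * (a (d + 1) : Ordinal) + cnf d a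
        < ω ^ (d + 1) * (a (d + 1) : Ordinal) + ω ^ (d + 1) := by
          exact (add_lt_add_iff_left _).2 ih
      _ = ω ^ (d + 1) * ((a (d + 1) : Ordinal) + 1) := by rw [mul_add_one]
      _ ≤ ω ^ (d + 1) * ω := by
          apply mul_le_mul_right
          exact (lt_omega0.mpr ⟨a (d+1) + 1, by push_cast; ring⟩).le
      _ = ω ^ (d + 2) := by rw [← pow_succ]

lemma cnf_congr {d : ℕ} {a b : ℕ → ℕ} (h : ∀ i ≤ d, a i = b i) :
    cnf d a = cnf d b := by
  unfold cnf
  congr 1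
  apply List.map_congr_left
  intro i hi
  rw [List.mem_reverse, List.mem_range] at hi
  rw [h i (by omega)]

lemma cnf_pad {d e : ℕ} (hde : d ≤ e) {c : ℕ → ℕ} (hc : ∀ i, d < i → c i = 0) :
    cnf e c = cnf d c := by
  induction e with
  | zero =>
    obtain rfl : d = 0 := Nat.le_zero.mp hde
    rfl
  | succ e ih =>
    rcases Nat.eq_or_lt_of_le hde with h | h
    · rw [h]
    · rw [cnf_succ, hc (e + 1) (by omega), ih (by omega)]
      simp

/-- Coefficient extraction. -/
noncomputable def C (α : Ordinal) (i : ℕ) : Ordinal := α % ω ^ (i + 1) / ω ^ i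

lemma C_cnf (d : ℕ) (a : ℕ → ℕ) (i : ℕ) :
    C (cnf d a) i = if i ≤ d then (a i : Ordinal) else 0 := by
  induction d with
  | zero =>
    rw [cnf_zero]
    rcases Nat.eq_zero_or_pos i with h | h
    · subst h
      simp [C, Ordinal.mod_eq_of_lt (natCast_lt_omega_pow _ 0),
        Ordinal.mod_eq_of_lt (natCast_lt_omega0 (a 0))]
    · rw [if_neg (by omega)]
      unfold C
      rw [Ordinal.mod_eq_of_lt (natCast_lt_omega_pow _ i)]
      apply Ordinal.div_eq_zero_of_lt
      calc ((a 0 : ℕ) : Ordinal) < ω := natCast_lt_omega0 _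
        _ ≤ ω ^ i := by
          conv_lhs => rw [← pow_one ω]
          exact pow_le_pow_right₀ one_lt_omega0.le (by omega)
  | succ d ih =>
    rw [cnf_succ]
    rcases lt_trichotomy i (d + 1) with h | h | h
    · have hi : i ≤ d := by omega
      have key : C (ω ^ (d + 1) * ((a (d + 1) : ℕ) : Ordinal) + cnf d a) i = C (cnf d a) i := by
        unfold C
        congr 1
        have hsplit : ω ^ (d + 1) = ω ^ (i + 1) * ω ^ (d - i) := by
          rw [← pow_add]; congr 1; omega
        rw [hsplit, mul_assoc, Ordinal.mul_add_mod_self]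
      rw [key, ih, if_pos hi, if_pos (by omega : i ≤ d + 1)]
    · subst h
      rw [if_pos le_rfl]
      unfold C
      have hlt : ω ^ (d + 1) * ((a (d + 1) : ℕ) : Ordinal) + cnf d a < ω ^ (d + 1 + 1) := by
        rw [← cnf_succ]; exact cnf_lt (d + 1) a
      rw [Ordinal.mod_eq_of_lt hlt,
        Ordinal.mul_add_div _ (pow_ne_zero _ omega0_ne_zero),
        Ordinal.div_eq_zero_of_lt (cnf_lt d a), add_zero]
    · rw [if_neg (by omega)]
      unfold C
      have h1 : cnf (d + 1) a < ω ^ (i + 1) :=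
        lt_of_lt_of_le (cnf_lt (d + 1) a)
          (pow_le_pow_right₀ one_lt_omega0.le (by omega))
      have h2 : cnf (d + 1) a < ω ^ i :=
        lt_of_lt_of_le (cnf_lt (d + 1) a)
          (pow_le_pow_right₀ one_lt_omega0.le (by omega))
      rw [← cnf_succ d a]
      rw [Ordinal.mod_eq_of_lt h1, Ordinal.div_eq_zero_of_lt h2]

/-- Uniqueness of Cantor coefficients. -/
lemma cnf_inj {d e : ℕ} {a b : ℕ → ℕ} (h : cnf d a = cnf e b) (i : ℕ) :
    (if i ≤ d then a i else 0) = (if i ≤ e then b i else 0) := by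
  have h1 := C_cnf d a i
  rw [h, C_cnf e b i] at h1
  split_ifs at h1 ⊢ <;> first | rfl | exact_mod_cast h1.symm

/-- The infimum with respect to the weaker-than order of two ordinals below `ω^ω` in Cantor
normal form exists and is given by the coefficient-wise minimum. -/
theorem weaker_inf (d : ℕ) (a b : ℕ → ℕ) :
    Weaker (cnf d fun i => min (a i) (b i)) (cnf d a) ∧
    Weaker (cnf d fun i => min (a i) (b i)) (cnf d b) ∧
    ∀ γ : Ordinal, Weaker γ (cnf d a) → Weaker γ (cnf d b) →
      Weaker γ (cnf d fun i => min (a i) (b i)) := by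
  refine ⟨⟨d, _, a, rfl, rfl, fun i => min_le_left _ _⟩,
    ⟨d, _, b, rfl, rfl, fun i => min_le_right _ _⟩, ?_⟩
  rintro γ ⟨d1, a1, b1, rfl, hb1, hab1⟩ ⟨d2, a2, b2, h12, hb2, hab2⟩
  -- padded coefficients
  set c : ℕ → ℕ := fun i => if i ≤ d1 then a1 i else 0 with hc
  have hcle_a : ∀ i, c i ≤ a i := by
    intro i
    have := cnf_inj hb1.symm i
    rcases le_or_gt i d1 with h | h
    · rcases le_or_gt i d with h' | h'
      · simp only [hc, if_pos h]
        calc a1 i ≤ b1 i := hab1 i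
          _ = a i := by simpa [h, h'] using this
      · simp only [hc, if_pos h]
        have : b1 i = 0 := by simpa [h, not_le.mpr h'] using this
        calc a1 i ≤ b1 i := hab1 i
          _ = 0 := this
          _ ≤ a i := Nat.zero_le _
    · simp [hc, not_le.mpr h]
  have hczero : ∀ i, d1 < i → c i = 0 := fun i h => by simp [hc, not_le.mpr h]
  -- γ's coefficients via the second hypothesis agree with c
  have hceq : ∀ i, (if i ≤ d2 then a2 i else 0) = c i := fun i => (cnf_inj h12 i).symm
  have hcle_b : ∀ i, c i ≤ b i := by
    intro i
    have := cnf_inj hb2.symm i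
    rw [← hceq i]
    rcases le_or_gt i d2 with h | h
    · rcases le_or_gt i d with h' | h'
      · simp only [if_pos h]
        calc a2 i ≤ b2 i := hab2 i
          _ = b i := by simpa [h, h'] using this
      · simp only [if_pos h]
        have : b2 i = 0 := by simpa [h, not_le.mpr h'] using this
        calc a2 i ≤ b2 i := hab2 i
          _ = 0 := this
          _ ≤ b i := Nat.zero_le _
    · simp [not_le.mpr h]
  -- γ = cnf d c
  have hγ1 : cnf d1 a1 = cnf d1 c := cnf_congr (fun i hi => by simp [hc, hi])
  have hczero' : ∀ i, d < i → c i = 0 := by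
    intro i hi
    have := hcle_a i
    have : c i ≤ a i := this
    rcases le_or_gt i d1 with h | h
    · have h2 := cnf_inj hb1.symm i
      simp only [if_pos h, if_neg (not_le.mpr hi)] at h2
      have : a1 i = 0 := Nat.le_zero.mp (h2 ▸ hab1 i)
      simp [hc, h, this]
    · exact hczero i h
  have hγ : cnf d1 a1 = cnf d c := by
    rw [hγ1]
    rcases le_total d1 d with h | h
    · exact (cnf_pad h hczero).symm
    · exact cnf_pad h hczero'
  exact ⟨d, c, _, hγ, rfl, fun i => le_min (hcle_a i) (hcle_b i)⟩
end

section
/- Let R be a commutative Noetherian ring and 0 → N → M → Q → 0 a short exact sequence of finitely generated R-modules, where M has no embedded primes (every associated prime of M is minimal in its support). Then for every associated prime 𝔭 of M, ℓ_𝔭(M) = ℓ_𝔭(N) + ℓ_𝔭(Q), and for every prime 𝔭 not associated to M, ℓ_𝔭(N) + ℓ_𝔭(Q) ≥ ℓ_𝔭(M) with the difference supported on Ass(Q) \ Ass(M). -/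
/-- The `𝔭`-torsion submodule `H⁰_𝔭(M)` of the localization `M_𝔭`: the elements of
`LocalizedModule 𝔭.primeCompl M` annihilated by some power of `𝔭 R_𝔭`. -/
noncomputable def pTorsion {R : Type*} [CommRing R] (p : Ideal R) [p.IsPrime]
    (M : Type*) [AddCommGroup M] [Module R M] :
    Submodule (Localization.AtPrime p) (LocalizedModule p.primeCompl M) :=
  ⨆ n : ℕ,
    Submodule.torsionBySet (Localization.AtPrime p) (LocalizedModule p.primeCompl M)
      ((Ideal.map (algebraMap R (Localization.AtPrime p)) p ^ n :
        Ideal (Localization.AtPrime p)) : Set (Localization.AtPrime p))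

/-- The length of a module: the Krull dimension of its lattice of submodules
(`⊥` never occurs; the value is `⊤` when there are chains of unbounded length). -/
noncomputable def modLength (A : Type*) (M : Type*) [Ring A] [AddCommGroup M] [Module A M] :
    WithBot ℕ∞ :=
  Order.krullDim (Submodule A M)

/-- The local multiplicity `ℓ_𝔭(M)`: the length over `R_𝔭` of the `𝔭`-torsion submodule
of the localization `M_𝔭`. -/
noncomputable def lmult {R : Type*} [CommRing R] (p : PrimeSpectrum R)
    (M : Type*) [AddCommGroup M] [Module R M] : WithBot ℕ∞ :=
  modLength (Localization.AtPrime p.asIdeal) (pTorsion p.asIdeal M)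

/-! ### Auxiliary order-theoretic lemmas -/

lemma aux_height_add_one_le {α : Type*} [Preorder α] {x y : α} (h : x < y) :
    Order.height x + 1 ≤ Order.height y := by
  rcases eq_or_ne (Order.height x) ⊤ with hx | hx
  · have hle : Order.height x ≤ Order.height y := Order.height_mono h.le
    rw [hx] at hle ⊢
    rw [le_antisymm le_top hle]
    simp
  · exact Order.add_one_le_of_lt (Order.height_strictMono h hx.lt_top)

lemma modLength_congr {A : Type*} [Ring A] {M M' : Type*} [AddCommGroup M] [Module A M]
    [AddCommGroup M'] [Module A M'] (e : M ≃ₗ[A] M') : modLength A M = modLength A M' :=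
  Order.krullDim_eq_of_orderIso (Submodule.orderIsoMapComap e)

lemma modLength_nonneg {A : Type*} [Ring A] {M : Type*} [AddCommGroup M] [Module A M] :
    0 ≤ modLength A M := Order.krullDim_nonneg

lemma modLength_eq_zero_of_subsingleton {A : Type*} [Ring A] {M : Type*} [AddCommGroup M]
    [Module A M] [Subsingleton M] : modLength A M = 0 := by
  have : Subsingleton (Submodule A M) := (Submodule.subsingleton_iff A).mpr ‹_›
  exact le_antisymm Order.krullDim_nonpos_of_subsingleton modLength_nonneg

/-- Additivity of length (as Krull dimension of the submodule lattice) in short exact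
sequences `0 → N → M → M/N → 0`. -/
lemma modLength_additive {A : Type*} [Ring A] {M : Type*} [AddCommGroup M] [Module A M]
    (N : Submodule A M) :
    modLength A M = modLength A N + modLength A (M ⧸ N) := by
  apply le_antisymm
  · -- ≤ : every chain in Sub(M) is bounded by the sum
    have key : ∀ (n : ℕ) (q : LTSeries (Submodule A M)), q.length = n →
        (q.length : ℕ∞) ≤ Order.height (Submodule.comap N.subtype q.last)
          + Order.height (Submodule.map N.mkQ q.last) := by
      intro n
      induction n with
      | zero => intro q hn; simp [hn]
      | succ n ih =>
        intro q hn
        have hne : q.length ≠ 0 := by omega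
        have hlt : q.eraseLast.last < q.last := q.eraseLast_last_rel_last hne
        have hq : q.eraseLast.length = n := by simp [RelSeries.eraseLast, hn]
        have ihq := ih q.eraseLast hq
        rw [hq] at ihq
        have h1 : Submodule.comap N.subtype q.eraseLast.last ≤ Submodule.comap N.subtype q.last :=
          Submodule.comap_mono hlt.le
        have h2 : Submodule.map N.mkQ q.eraseLast.last ≤ Submodule.map N.mkQ q.last :=
          Submodule.map_mono hlt.le
        have hstep : Submodule.comap N.subtype q.eraseLast.last < Submodule.comap N.subtype q.last
            ∨ Submodule.map N.mkQ q.eraseLast.last < Submodule.map N.mkQ q.last := by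
          by_contra hc
          push_neg at hc
          obtain ⟨hc1, hc2⟩ := hc
          have e1 : Submodule.comap N.subtype q.eraseLast.last
              = Submodule.comap N.subtype q.last := h1.antisymm (h1.lt_or_eq.resolve_left hc1).ge
          have e2 : Submodule.map N.mkQ q.eraseLast.last
              = Submodule.map N.mkQ q.last := h2.antisymm (h2.lt_or_eq.resolve_left hc2).ge
          have einf : q.last ⊓ N ≤ q.eraseLast.last ⊓ N := by
            rw [inf_comm, ← Submodule.map_comap_subtype, ← e1, Submodule.map_comap_subtype,
              inf_comm]
          have esup : q.last ⊔ N ≤ q.eraseLast.last ⊔ N := by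
            rw [sup_comm, ← Submodule.comap_map_mkQ, ← e2, Submodule.comap_map_mkQ, sup_comm]
          exact hlt.ne (eq_of_le_of_inf_le_of_sup_le hlt.le einf esup)
        rw [hn]
        rcases hstep with h | h
        · calc (n + 1 : ℕ∞)
              ≤ (Order.height (Submodule.comap N.subtype q.eraseLast.last)
                + Order.height (Submodule.map N.mkQ q.eraseLast.last)) + 1 := by
                exact_mod_cast add_le_add ihq (le_refl (1 : ℕ∞))
            _ = (Order.height (Submodule.comap N.subtype q.eraseLast.last) + 1)
                + Order.height (Submodule.map N.mkQ q.eraseLast.last) := by ring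
            _ ≤ _ := add_le_add (aux_height_add_one_le h) (Order.height_mono h2)
        · calc (n + 1 : ℕ∞)
              ≤ (Order.height (Submodule.comap N.subtype q.eraseLast.last)
                + Order.height (Submodule.map N.mkQ q.eraseLast.last)) + 1 := by
                exact_mod_cast add_le_add ihq (le_refl (1 : ℕ∞))
            _ = Order.height (Submodule.comap N.subtype q.eraseLast.last)
                + (Order.height (Submodule.map N.mkQ q.eraseLast.last) + 1) := by ring
            _ ≤ _ := add_le_add (Order.height_mono h1) (aux_height_add_one_le h)
    rw [modLength, Order.krullDim_eq_iSup_length]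
    rw [show ((↑(⨆ (p : LTSeries (Submodule A M)), (p.length : ℕ∞)) : WithBot ℕ∞))
        = ⨆ (p : LTSeries (Submodule A M)), ((p.length : ℕ∞) : WithBot ℕ∞) from by
      rw [WithBot.coe_iSup (OrderTop.bddAbove _)]]
    apply iSup_le
    intro q
    calc ((q.length : ℕ∞) : WithBot ℕ∞)
        ≤ ((Order.height (Submodule.comap N.subtype q.last)
          + Order.height (Submodule.map N.mkQ q.last) : ℕ∞) : WithBot ℕ∞) := by
          exact_mod_cast key q.length q rfl
      _ = (Order.height (Submodule.comap N.subtype q.last) : WithBot ℕ∞)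
          + (Order.height (Submodule.map N.mkQ q.last) : WithBot ℕ∞) := by push_cast; rfl
      _ ≤ modLength A N + modLength A (M ⧸ N) :=
          add_le_add (Order.height_le_krullDim _) (Order.height_le_krullDim _)
  · -- ≥
    have hN : modLength A N ≤ (Order.height (N : Submodule A M) : WithBot ℕ∞) := by
      rw [modLength, Order.krullDim_eq_iSup_length,
        show ((↑(⨆ (p : LTSeries (Submodule A ↥N)), (p.length : ℕ∞)) : WithBot ℕ∞))
          = ⨆ (p : LTSeries (Submodule A ↥N)), ((p.length : ℕ∞) : WithBot ℕ∞) from by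
        rw [WithBot.coe_iSup (OrderTop.bddAbove _)]]
      apply iSup_le
      intro q
      have hlast : (q.map (Submodule.map N.subtype)
          (Submodule.map_strictMono_of_injective N.injective_subtype)).last ≤ N := by
        rw [LTSeries.last_map]
        exact Submodule.map_subtype_le N _
      have := Order.length_le_height hlast
      simpa using (WithBot.coe_le_coe.mpr this)
    have hQ : modLength A (M ⧸ N) ≤ (Order.coheight (N : Submodule A M) : WithBot ℕ∞) := by
      rw [modLength, Order.krullDim_eq_iSup_length,
        show ((↑(⨆ (p : LTSeries (Submodule A (M ⧸ N))), (p.length : ℕ∞)) : WithBot ℕ∞))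
          = ⨆ (p : LTSeries (Submodule A (M ⧸ N))), ((p.length : ℕ∞) : WithBot ℕ∞) from by
        rw [WithBot.coe_iSup (OrderTop.bddAbove _)]]
      apply iSup_le
      intro q
      have hhead : N ≤ (q.map (Submodule.comap N.mkQ)
          (Submodule.comap_strictMono_of_surjective N.mkQ_surjective)).head := by
        rw [LTSeries.head_map]
        calc N = Submodule.comap N.mkQ ⊥ := by rw [Submodule.comap_bot, Submodule.ker_mkQ]
          _ ≤ _ := Submodule.comap_mono bot_le
      have := Order.length_le_coheight hhead
      simpa using (WithBot.coe_le_coe.mpr this)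
    calc modLength A N + modLength A (M ⧸ N)
        ≤ (Order.height (N : Submodule A M) : WithBot ℕ∞) + (Order.coheight (N : Submodule A M)) :=
          add_le_add hN hQ
      _ = ((Order.height (N : Submodule A M) + Order.coheight (N : Submodule A M) : ℕ∞) :
          WithBot ℕ∞) := by push_cast; rfl
      _ ≤ ↑(⨆ (a : Submodule A M), Order.height a + Order.coheight a) := by
          exact_mod_cast le_iSup (fun a : Submodule A M => Order.height a + Order.coheight a) N
      _ = modLength A M := (Order.krullDim_eq_iSup_height_add_coheight_of_nonempty).symm

/-! ### Auxiliary localization lemmas -/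

lemma pTorsion_eq_top {R : Type*} [CommRing R] (p : Ideal R) [p.IsPrime]
    (M : Type*) [AddCommGroup M] [Module R M] {n : ℕ}
    (h : (Ideal.map (algebraMap R (Localization.AtPrime p)) p) ^ n ≤
      Module.annihilator (Localization.AtPrime p) (LocalizedModule p.primeCompl M)) :
    pTorsion p M = ⊤ := by
  rw [eq_top_iff]
  refine le_trans ?_ (le_iSup _ n)
  intro x _
  rw [Submodule.mem_torsionBySet_iff]
  exact fun a => Module.mem_annihilator.mp (h a.2) x

lemma descend_assoc {R : Type*} [CommRing R] (p : Ideal R) [p.IsPrime]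
    {M : Type*} [AddCommGroup M] [Module R M] [IsNoetherianRing R] (m : M) (s : p.primeCompl)
    (hy : Ideal.map (algebraMap R (Localization.AtPrime p)) p
      = (Submodule.span (Localization.AtPrime p)
          {LocalizedModule.mk (S := p.primeCompl) m s}).annihilator) :
    p ∈ associatedPrimes R M := by
  classical
  obtain ⟨T, hT⟩ := IsNoetherian.noetherian p
  set y : LocalizedModule p.primeCompl M := LocalizedModule.mk m s with hydef
  have key : ∀ a : R, a ∈ p → ∃ v : p.primeCompl, (v : R) • a • m = 0 := by
    intro a ha
    have h1 : algebraMap R (Localization.AtPrime p) a ∈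
        (Submodule.span (Localization.AtPrime p) {y}).annihilator := by
      rw [← hy]; exact Ideal.mem_map_of_mem _ ha
    rw [Submodule.mem_annihilator_span_singleton] at h1
    have h2 : (a • y : LocalizedModule p.primeCompl M) = 0 := by
      rwa [algebraMap_smul] at h1
    rw [hydef, LocalizedModule.smul'_mk, ← LocalizedModule.zero_mk s,
      LocalizedModule.mk_eq] at h2
    obtain ⟨v, hv⟩ := h2
    refine ⟨v * s, ?_⟩
    rw [smul_zero, smul_zero] at hv
    rw [← Submonoid.smul_def, mul_smul]
    exact hv
  choose! u hu using key
  set c : p.primeCompl := ∏ a ∈ T, if ha : (a : R) ∈ p then u a else 1 with hc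
  refine isAssociatedPrime_iff.mpr ⟨‹p.IsPrime›, (c : R) • m, ?_⟩
  apply le_antisymm
  · -- p ≤ ann
    refine le_trans hT.ge ?_
    rw [Submodule.span_le]
    intro a haT
    have hap : a ∈ p := by rw [← hT]; exact Ideal.subset_span haT
    rw [SetLike.mem_coe, Submodule.mem_colon_singleton, Submodule.mem_bot]
    set d : p.primeCompl := ∏ b ∈ T.erase a, if hb : (b : R) ∈ p then u b else 1 with hd
    have hcd : c = u a * d := by
      rw [hc, hd, ← Finset.mul_prod_erase T _ haT, dif_pos hap]
    rw [hcd, smul_comm]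
    push_cast
    rw [mul_comm, mul_smul, hu a hap, smul_zero]
  · -- ann ≤ p
    intro r hr
    rw [Submodule.mem_colon_singleton, Submodule.mem_bot] at hr
    have h0 : (r • y : LocalizedModule p.primeCompl M) = 0 := by
      rw [hydef, LocalizedModule.smul'_mk, ← LocalizedModule.zero_mk s, LocalizedModule.mk_eq]
      refine ⟨c, ?_⟩
      rw [smul_zero, smul_zero, Submonoid.smul_def, Submonoid.smul_def,
        smul_comm (c : R) (s : R), smul_comm (c : R) r, hr, smul_zero]
    have h1 : algebraMap R (Localization.AtPrime p) r ∈
        (Submodule.span (Localization.AtPrime p) {y}).annihilator := by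
      rw [Submodule.mem_annihilator_span_singleton, algebraMap_smul, h0]
    rw [← hy, Localization.AtPrime.map_eq_maximalIdeal,
      IsLocalization.AtPrime.to_map_mem_maximal_iff _ p] at h1
    exact h1

lemma mem_associatedPrimes_of_pTorsion_ne_bot {R : Type*} [CommRing R] [IsNoetherianRing R]
    (p : Ideal R) [p.IsPrime] {M : Type*} [AddCommGroup M] [Module R M]
    (h : pTorsion p M ≠ ⊥) : p ∈ associatedPrimes R M := by
  classical
  have : IsNoetherianRing (Localization.AtPrime p) :=
    IsLocalization.isNoetherianRing p.primeCompl _ ‹_›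
  obtain ⟨x, hx, hx0⟩ := (Submodule.ne_bot_iff _).mp h
  have hdir : Directed (· ≤ ·) (fun n : ℕ =>
      Submodule.torsionBySet (Localization.AtPrime p) (LocalizedModule p.primeCompl M)
        ((Ideal.map (algebraMap R (Localization.AtPrime p)) p ^ n :
          Ideal (Localization.AtPrime p)) : Set (Localization.AtPrime p))) := by
    apply Monotone.directed_le
    intro a b hab
    exact Submodule.torsionBySet_le_torsionBySet_of_subset (Ideal.pow_le_pow_right hab)
  rw [pTorsion, Submodule.mem_iSup_of_directed _ hdir] at hx
  obtain ⟨n, hn⟩ := hx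
  rw [Submodule.mem_torsionBySet_iff] at hn
  obtain ⟨P, hP, hPx⟩ := exists_le_isAssociatedPrime_of_isNoetherianRing
    (Localization.AtPrime p) x hx0
  have hpP : (Ideal.map (algebraMap R (Localization.AtPrime p)) p) ≤ P := by
    apply hP.isPrime.le_of_pow_le (n := n)
    intro a ha
    exact hPx (Submodule.mem_colon_singleton.mpr ((Submodule.mem_bot _).mpr (hn ⟨a, ha⟩)))
  have hPp : P = Ideal.map (algebraMap R (Localization.AtPrime p)) p := by
    rw [Localization.AtPrime.map_eq_maximalIdeal] at hpP ⊢
    exact le_antisymm (IsLocalRing.le_maximalIdeal hP.isPrime.ne_top) hpP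
  obtain ⟨_, y, hy⟩ := isAssociatedPrime_iff.mp hP
  rw [hPp] at hy
  clear hPx hpP hn hx0 h
  induction y using LocalizedModule.induction_on with
  | h m s => exact descend_assoc p m s (hy.trans (by
    ext a; rw [Submodule.mem_colon_singleton, Submodule.mem_bot,
      Submodule.mem_annihilator_span_singleton]))

/-- If `p` is minimal over the annihilator of `M`, then some power of `p R_p` kills `M_p`. -/
lemma exists_pow_le_annihilator_localized {R : Type*} [CommRing R] [IsNoetherianRing R]
    (p : Ideal R) [p.IsPrime] {M : Type*} [AddCommGroup M] [Module R M]
    (hp : p ∈ (Module.annihilator R M).minimalPrimes) :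
    ∃ n : ℕ, (Ideal.map (algebraMap R (Localization.AtPrime p)) p) ^ n ≤
      Module.annihilator (Localization.AtPrime p) (LocalizedModule p.primeCompl M) := by
  have : IsNoetherianRing (Localization.AtPrime p) :=
    IsLocalization.isNoetherianRing p.primeCompl _ ‹_›
  apply Ideal.exists_pow_le_of_le_radical_of_fg _ (IsNoetherian.noetherian _)
  rw [Ideal.radical_eq_sInf]
  apply le_sInf
  rintro Q ⟨hQ1, hQ2⟩
  rw [Ideal.map_le_iff_le_comap]
  have hcq : (Ideal.comap (algebraMap R (Localization.AtPrime p)) Q).IsPrime :=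
    hQ2.comap _
  have hannq : Module.annihilator R M ≤ Ideal.comap (algebraMap R (Localization.AtPrime p)) Q := by
    intro r hr
    rw [Ideal.mem_comap]
    apply hQ1
    rw [Module.mem_annihilator]
    intro x
    induction x using LocalizedModule.induction_on with
    | h m s =>
      rw [algebraMap_smul, LocalizedModule.smul'_mk, Module.mem_annihilator.mp hr m,
        LocalizedModule.zero_mk]
  have hqp : Ideal.comap (algebraMap R (Localization.AtPrime p)) Q ≤ p := by
    intro r hr
    rw [Ideal.mem_comap] at hr
    have := IsLocalRing.le_maximalIdeal hQ2.ne_top hr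
    rwa [IsLocalization.AtPrime.to_map_mem_maximal_iff _ p] at this
  exact hp.2 ⟨hcq, hannq⟩ hqp

/-! ### The main theorem -/

/-- Semi-additivity of the fundamental cycle: for a short exact sequence
`0 → N → M → M/N → 0` with `M` having no embedded primes (every associated prime of `M`
is minimal over the annihilator of `M`), the local multiplicities are additive at every
associated prime of `M`, and at the other primes `ℓ_𝔭(N) + ℓ_𝔭(M/N) ≥ ℓ_𝔭(M)`, with strict
inequality only at primes in `Ass(M/N) \ Ass(M)`. -/
theorem lmult_semiadditive {R : Type*} [CommRing R] [IsNoetherianRing R]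
    {M : Type*} [AddCommGroup M] [Module R M] [Module.Finite R M]
    (N : Submodule R M)
    (hM : ∀ p ∈ associatedPrimes R M, p ∈ (Module.annihilator R M).minimalPrimes) :
    (∀ p : PrimeSpectrum R, p.asIdeal ∈ associatedPrimes R M →
      lmult p M = lmult p N + lmult p (M ⧸ N)) ∧
    (∀ p : PrimeSpectrum R, p.asIdeal ∉ associatedPrimes R M →
      lmult p M ≤ lmult p N + lmult p (M ⧸ N) ∧
      (lmult p N + lmult p (M ⧸ N) ≠ lmult p M →
        p.asIdeal ∈ associatedPrimes R (M ⧸ N) \ associatedPrimes R M)) := by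
  constructor
  · -- at associated primes of M, additivity
    intro p hp
    obtain ⟨n, hpow⟩ := exists_pow_le_annihilator_localized p.asIdeal (hM _ hp)
    set S := p.asIdeal.primeCompl
    set Rp := Localization.AtPrime p.asIdeal
    set fp := LocalizedModule.map (M := ↥N) (N := M) S N.subtype with hfp
    set gp := LocalizedModule.map (M := M) (N := M ⧸ N) S N.mkQ with hgp
    have hinj : Function.Injective fp :=
      LocalizedModule.map_injective S N.subtype N.injective_subtype
    have hsurj : Function.Surjective gp :=
      LocalizedModule.map_surjective S N.mkQ N.mkQ_surjective
    have hex : Function.Exact fp gp :=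
      LocalizedModule.map_exact S N.subtype N.mkQ (LinearMap.exact_subtype_mkQ N)
    -- all three localized modules are killed by a power of p R_p
    have hpowN : (Ideal.map (algebraMap R Rp) p.asIdeal) ^ n ≤
        Module.annihilator Rp (LocalizedModule S ↥N) := by
      intro a ha
      rw [Module.mem_annihilator]
      intro x
      apply hinj
      rw [map_smul, map_zero]
      exact Module.mem_annihilator.mp (hpow ha) (fp x)
    have hpowQ : (Ideal.map (algebraMap R Rp) p.asIdeal) ^ n ≤
        Module.annihilator Rp (LocalizedModule S (M ⧸ N)) := by
      intro a ha
      rw [Module.mem_annihilator]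
      intro x
      obtain ⟨z, rfl⟩ := hsurj x
      rw [← map_smul, Module.mem_annihilator.mp (hpow ha) z, map_zero]
    have hTM : pTorsion p.asIdeal M = ⊤ := pTorsion_eq_top _ _ hpow
    have hTN : pTorsion p.asIdeal ↥N = ⊤ := pTorsion_eq_top _ _ hpowN
    have hTQ : pTorsion p.asIdeal (M ⧸ N) = ⊤ := pTorsion_eq_top _ _ hpowQ
    -- identify the lengths with lengths of the localized modules
    have eM : lmult p M = modLength Rp (LocalizedModule S M) := by
      rw [lmult, hTM]; exact modLength_congr (Submodule.topEquiv)
    have eN : lmult p ↥N = modLength Rp (LocalizedModule S ↥N) := by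
      rw [lmult, hTN]; exact modLength_congr (Submodule.topEquiv)
    have eQ : lmult p (M ⧸ N) = modLength Rp (LocalizedModule S (M ⧸ N)) := by
      rw [lmult, hTQ]; exact modLength_congr (Submodule.topEquiv)
    rw [eM, eN, eQ]
    have hker : LinearMap.ker gp = LinearMap.range fp := LinearMap.exact_iff.mp hex
    calc modLength Rp (LocalizedModule S M)
        = modLength Rp ↥(LinearMap.range fp)
          + modLength Rp (LocalizedModule S M ⧸ LinearMap.range fp) :=
          modLength_additive _
      _ = modLength Rp (LocalizedModule S ↥N) + modLength Rp (LocalizedModule S (M ⧸ N)) := by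
          congr 1
          · exact (modLength_congr (LinearEquiv.ofInjective fp hinj)).symm
          · rw [← hker]
            exact modLength_congr (LinearMap.quotKerEquivOfSurjective gp hsurj)
  · -- away from the associated primes of M
    intro p hp
    have hbotM : pTorsion p.asIdeal M = ⊥ := by
      by_contra hne
      exact hp (mem_associatedPrimes_of_pTorsion_ne_bot p.asIdeal hne)
    have h0M : lmult p M = 0 := by
      rw [lmult, hbotM]
      have : Subsingleton ↥(⊥ : Submodule (Localization.AtPrime p.asIdeal)
          (LocalizedModule p.asIdeal.primeCompl M)) := by
        constructor; rintro ⟨a, ha⟩ ⟨b, hb⟩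
        simp only [Submodule.mem_bot] at ha hb
        simp [ha, hb]
      exact modLength_eq_zero_of_subsingleton
    constructor
    · rw [h0M]
      exact add_nonneg modLength_nonneg modLength_nonneg
    · intro hne
      have hbotN : pTorsion p.asIdeal ↥N = ⊥ := by
        by_contra hneN
        exact hp (associatedPrimes.subset_of_injective N.injective_subtype
          (mem_associatedPrimes_of_pTorsion_ne_bot p.asIdeal hneN))
      have h0N : lmult p ↥N = 0 := by
        rw [lmult, hbotN]
        have : Subsingleton ↥(⊥ : Submodule (Localization.AtPrime p.asIdeal)
            (LocalizedModule p.asIdeal.primeCompl ↥N)) := by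
          constructor; rintro ⟨a, ha⟩ ⟨b, hb⟩
          simp only [Submodule.mem_bot] at ha hb
          simp [ha, hb]
        exact modLength_eq_zero_of_subsingleton
      have hQne : pTorsion p.asIdeal (M ⧸ N) ≠ ⊥ := by
        intro hbotQ
        apply hne
        rw [h0M, h0N, zero_add, lmult, hbotQ]
        have : Subsingleton ↥(⊥ : Submodule (Localization.AtPrime p.asIdeal)
            (LocalizedModule p.asIdeal.primeCompl (M ⧸ N))) := by
          constructor; rintro ⟨a, ha⟩ ⟨b, hb⟩
          simp only [Submodule.mem_bot] at ha hb
          simp [ha, hb]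
        exact modLength_eq_zero_of_subsingleton
      exact ⟨mem_associatedPrimes_of_pTorsion_ne_bot p.asIdeal hQne, hp⟩
end
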